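/- Let f : ℝ × ℝ → ℝ be twice continuously differentiable. Then the functions (t,s) ↦ e^{−t}·∂f/∂t(t,s) and (t,s) ↦ e^{−t}·∂f/∂s(t,s) are both independent of t (i.e., e^{−t}·∂f/∂t(t,s) = e^{−t′}·∂f/∂t(t′,s) and e^{−t}·∂f/∂s(t,s) = e^{−t′}·∂f/∂s(t′,s) for all t, t′, s ∈ ℝ) if and only if there exist a function g : ℝ → ℝ and a constant C ∈ ℝ such that f(t,s) = e^t·g(s) + C for all (t,s) ∈ ℝ². -/

import Mathlib

/-- A twice continuously differentiable function `f(t, s)` has the property that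
`e^(−t)·∂f/∂t(t,s)` and `e^(−t)·∂f/∂s(t,s)` are both independent of `t` if and only if
`f` is cylindrical, i.e. `f(t,s) = eᵗ·g(s) + C` for some `g : ℝ → ℝ` and constant `C`. -/
theorem cylindrical_iff_rescaled_partials_t_invariant (f : ℝ × ℝ → ℝ)
    (hf : ContDiff ℝ 2 f) :
    ((∀ t t' s : ℝ,
        Real.exp (-t) * deriv (fun τ => f (τ, s)) t =
          Real.exp (-t') * deriv (fun τ => f (τ, s)) t') ∧
      (∀ t t' s : ℝ,
        Real.exp (-t) * deriv (fun σ => f (t, σ)) s =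
          Real.exp (-t') * deriv (fun σ => f (t', σ)) s)) ↔
    ∃ (g : ℝ → ℝ) (C : ℝ), ∀ t s : ℝ, f (t, s) = Real.exp t * g s + C := by
  have hdf : Differentiable ℝ f := hf.differentiable (by norm_num)
  set DT : ℝ → ℝ → ℝ := fun t s => fderiv ℝ f (t, s) (1, 0) with hDT
  set DS : ℝ → ℝ → ℝ := fun t s => fderiv ℝ f (t, s) (0, 1) with hDS
  have hT : ∀ t s : ℝ, HasDerivAt (fun τ => f (τ, s)) (DT t s) t := by
    intro t s
    have h1 : HasDerivAt (fun τ : ℝ => (τ, s)) ((1 : ℝ), (0 : ℝ)) t :=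
      (hasDerivAt_id t).prodMk (hasDerivAt_const t s)
    exact (hdf (t, s)).hasFDerivAt.comp_hasDerivAt t h1
  have hS : ∀ t s : ℝ, HasDerivAt (fun σ => f (t, σ)) (DS t s) s := by
    intro t s
    have h1 : HasDerivAt (fun σ : ℝ => (t, σ)) ((0 : ℝ), (1 : ℝ)) s :=
      (hasDerivAt_const s t).prodMk (hasDerivAt_id s)
    exact (hdf (t, s)).hasFDerivAt.comp_hasDerivAt s h1
  have expne : ∀ t : ℝ, Real.exp t ≠ 0 := fun t => (Real.exp_pos t).ne'
  constructor
  · rintro ⟨h1, h2⟩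
    -- rewrite conditions in terms of DT, DS
    have hDT' : ∀ t s : ℝ, DT t s = Real.exp t * DT 0 s := by
      intro t s
      have hc := h1 t 0 s
      rw [(hT t s).deriv, (hT 0 s).deriv, neg_zero, Real.exp_zero, one_mul] at hc
      have : DT t s = Real.exp t * (Real.exp (-t) * DT t s) := by
        rw [← mul_assoc, ← Real.exp_add]; simp
      rw [this, hc]
    have hDS' : ∀ t s : ℝ, DS t s = Real.exp t * DS 0 s := by
      intro t s
      have hc := h2 t 0 s
      rw [(hS t s).deriv, (hS 0 s).deriv, neg_zero, Real.exp_zero, one_mul] at hc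
      have : DS t s = Real.exp t * (Real.exp (-t) * DS t s) := by
        rw [← mul_assoc, ← Real.exp_add]; simp
      rw [this, hc]
    -- step A : f(t,s) - e^t f(0,s) is independent of s
    have hG : ∀ t s : ℝ, f (t, s) - Real.exp t * f (0, s) =
        f (t, 0) - Real.exp t * f (0, 0) := by
      intro t s
      have hG' : ∀ σ : ℝ, HasDerivAt (fun σ => f (t, σ) - Real.exp t * f (0, σ)) 0 σ := by
        intro σ
        have h := (hS t σ).sub ((hS 0 σ).const_mul (Real.exp t))
        rwa [hDS' t σ, sub_self] at h
      exact is_const_of_deriv_eq_zero (fun σ => (hG' σ).differentiableAt)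
        (fun σ => (hG' σ).deriv) s 0
    -- step B : φ t := f(t,0) - e^t f(0,0) satisfies φ t = a e^t - a
    set a : ℝ := DT 0 0 - f (0, 0) with ha
    have hφ : ∀ t : ℝ, f (t, 0) - Real.exp t * f (0, 0) = a * Real.exp t - a := by
      intro t
      have hψ' : ∀ τ : ℝ, HasDerivAt
          (fun τ => f (τ, 0) - Real.exp τ * f (0, 0) - (a * Real.exp τ - a)) 0 τ := by
        intro τ
        have h := ((hT τ 0).sub ((Real.hasDerivAt_exp τ).mul_const (f (0, 0)))).sub
          (((Real.hasDerivAt_exp τ).const_mul a).sub_const a)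
        have hval : DT τ 0 - Real.exp τ * f (0, 0) - a * Real.exp τ = 0 := by
          rw [hDT' τ 0, ha]; ring
        rwa [hval] at h
      have hconst := is_const_of_deriv_eq_zero (fun τ => (hψ' τ).differentiableAt)
        (fun τ => (hψ' τ).deriv) t 0
      simp only [Real.exp_zero, one_mul, mul_one, sub_self, sub_zero] at hconst
      linarith [hconst]
    refine ⟨fun s => f (0, s) + a, -a, fun t s => ?_⟩
    have := hG t s
    have h2 := hφ t
    have : f (t, s) = Real.exp t * f (0, s) + (a * Real.exp t - a) := by linarith
    rw [this]; ring
  · rintro ⟨g, C, hfgC⟩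
    have hg : ∀ s : ℝ, g s = f (0, s) - C := by
      intro s
      have := hfgC 0 s
      rw [Real.exp_zero, one_mul] at this
      linarith
    constructor
    · intro t t' s
      have key : ∀ τ : ℝ, deriv (fun τ => f (τ, s)) τ = Real.exp τ * g s := by
        intro τ
        have heq : (fun τ : ℝ => f (τ, s)) = fun τ => Real.exp τ * g s + C := by
          funext τ; exact hfgC τ s
        rw [heq]
        exact (((Real.hasDerivAt_exp τ).mul_const (g s)).add_const C).deriv
      rw [key t, key t', ← mul_assoc, ← mul_assoc, ← Real.exp_add, ← Real.exp_add]
      simp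
    · intro t t' s
      have key : ∀ τ : ℝ, deriv (fun σ => f (τ, σ)) s = Real.exp τ * DS 0 s := by
        intro τ
        have heq : (fun σ : ℝ => f (τ, σ)) = fun σ => Real.exp τ * (f (0, σ) - C) + C := by
          funext σ; rw [hfgC τ σ, hg σ]
        rw [heq]
        exact ((((hS 0 s).sub_const C).const_mul (Real.exp τ)).add_const C).deriv
      rw [key t, key t', ← mul_assoc, ← mul_assoc, ← Real.exp_add, ← Real.exp_add]
      simp
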